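/- If V₀, …, V_{r-1} satisfy (σE - A)V₀ = B and (σE - A)Vᵢ = E·V_{i-1} for 1 ≤ i ≤ r-1, then the block matrix V = [V₀, …, V_{r-1}] satisfies the Sylvester equation E·V·S - A·V = B·R, where S is the r×r (block) Jordan-type matrix with σ on the diagonal and -1 on the first superdiagonal (blockwise -I_m), and R = [I_m, 0, …, 0]. -/

import Mathlib

open Matrix

/-- If `(σE - A)V₀ = B` and `(σE - A)Vᵢ = E V_{i-1}`, then the block matrix
`V = [V₀, …, V_{r-1}]` satisfies `E V S - A V = B R` with the modified block
Jordan matrix `S` (diagonal `σ`, superdiagonal blocks `-I`) and `R = [I 0 ⋯ 0]`. -/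
theorem block_moment_sylvester (n m r : ℕ) (E A : Matrix (Fin n) (Fin n) ℝ)
    (B : Matrix (Fin n) (Fin m) ℝ) (σ : ℝ)
    (V : Fin r → Matrix (Fin n) (Fin m) ℝ)
    (h0 : ∀ h : 0 < r, (σ • E - A) * V ⟨0, h⟩ = B)
    (hstep : ∀ (i : ℕ) (hi : i + 1 < r),
      (σ • E - A) * V ⟨i + 1, hi⟩ = E * V ⟨i, Nat.lt_of_succ_lt hi⟩)
    (Vb : Matrix (Fin n) (Fin r × Fin m) ℝ)
    (hVb : ∀ x i j, Vb x (i, j) = V i x j)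
    (S : Matrix (Fin r × Fin m) (Fin r × Fin m) ℝ)
    (hS : ∀ i a j b, S (i, a) (j, b) =
      if i = j ∧ a = b then σ
      else if (j : ℕ) = (i : ℕ) + 1 ∧ a = b then -1 else 0)
    (R : Matrix (Fin m) (Fin r × Fin m) ℝ)
    (hR : ∀ a j b, R a (j, b) = if (j : ℕ) = 0 ∧ a = b then 1 else 0) :
    E * Vb * S - A * Vb = B * R := by
  ext x ⟨j, b⟩
  -- entry of E*Vb at (x,(i,a)) equals (E * V i) x a
  have hEV : ∀ i a, (E * Vb) x (i, a) = (E * V i) x a := by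
    intro i a; simp [mul_apply, hVb]
  have hAV : (A * Vb) x (j, b) = (A * V j) x b := by
    simp [mul_apply, hVb]
  have hBR : (B * R) x (j, b) = if (j : ℕ) = 0 then B x b else 0 := by
    simp only [mul_apply, hR]
    by_cases h : (j : ℕ) = 0
    · simp [h, mul_ite]
    · simp [h]
  have hg : ∀ (i : Fin r) (a : Fin m), S (i, a) (j, b) =
      if a = b then ((if i = j then σ else 0) +
        (if (j : ℕ) = (i : ℕ) + 1 then -1 else 0)) else 0 := by
    intro i a
    rw [hS]
    rcases eq_or_ne a b with h | h
    · rcases eq_or_ne i j with h2 | h2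
      · subst h2; simp [h]
      · simp [h, h2]
    · simp [h]
  have hLHS : (E * Vb * S) x (j, b) =
      σ * (E * V j) x b +
        ∑ i : Fin r, (if (j : ℕ) = (i : ℕ) + 1 then -((E * V i) x b) else 0) := by
    rw [mul_apply]
    rw [Fintype.sum_prod_type]
    simp only [hg, mul_ite, mul_zero, Finset.sum_ite_eq', Finset.mem_univ, if_true]
    simp only [hEV, mul_add, mul_ite, mul_zero, mul_neg, mul_one, Finset.sum_add_distrib,
      Finset.sum_ite_eq', Finset.mem_univ, if_true, mul_comm]
  rw [Matrix.sub_apply, hLHS, hAV, hBR]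
  rcases j with ⟨jv, hj⟩
  match jv with
  | 0 =>
    have : ∀ i : Fin r, (if (0 : ℕ) = (i : ℕ) + 1 then -((E * V i) x b) else 0) = 0 := by
      intro i; simp
    simp only [this, Finset.sum_const_zero, add_zero, if_pos rfl, if_true]
    have := congrFun (congrFun (h0 hj) x) b
    simp only [Matrix.sub_mul, Matrix.smul_mul, Matrix.sub_apply, Matrix.smul_apply, smul_eq_mul] at this
    linarith
  | k + 1 =>
    have hsum : ∑ i : Fin r, (if (k + 1 : ℕ) = (i : ℕ) + 1 then -((E * V i) x b) else 0)
        = -((E * V ⟨k, Nat.lt_of_succ_lt hj⟩) x b) := by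
      rw [Finset.sum_eq_single (⟨k, Nat.lt_of_succ_lt hj⟩ : Fin r)]
      · simp
      · intro i _ hne
        rw [if_neg]
        intro h
        exact hne (Fin.ext (show (i : ℕ) = k by omega))
      · simp
    rw [hsum]
    have := congrFun (congrFun (hstep k hj) x) b
    simp only [Matrix.sub_mul, Matrix.smul_mul, Matrix.sub_apply, Matrix.smul_apply, smul_eq_mul] at this
    norm_num
    linarith
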